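/- For the Ustilosky sphere with data e(S_{pπ}) = (n−1)p + 1, Δ(S_{pπ}) = 2((n−2)p + 2), σ(S_{pπ}) = 1, the Morse–Bott MEC formula gives χ⁺(M, ξ_p) = ((n−1)p + 1)/(2((n−2)p + 2)). Moreover, for n ≥ 3 fixed, the map p ↦ ((n−1)p + 1)/(2((n−2)p + 2)) is injective on positive integers p, so the mean Euler characteristic distinguishes infinitely many contact structures. -/

import Mathlib

/-- For the Ustilosky spheres, the map
`p ↦ ((n-1)p + 1)/(2((n-2)p + 2))` is injective on positive integers, for any
fixed `n ≥ 3`; hence the mean Euler characteristic distinguishes infinitely many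
contact structures. -/
theorem stmt_13 (n : ℕ) (hn : 3 ≤ n) :
    ∀ p₁ p₂ : ℕ, 0 < p₁ → 0 < p₂ →
      (((n : ℚ) - 1) * p₁ + 1) / (2 * (((n : ℚ) - 2) * p₁ + 2)) =
      (((n : ℚ) - 1) * p₂ + 1) / (2 * (((n : ℚ) - 2) * p₂ + 2)) →
      p₁ = p₂ := by
  intro p₁ p₂ h₁ h₂ h
  have hn' : (3 : ℚ) ≤ n := by exact_mod_cast hn
  have hp₁ : (0 : ℚ) ≤ p₁ := by positivity
  have hp₂ : (0 : ℚ) ≤ p₂ := by positivity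
  have hd₁ : (2 : ℚ) * (((n : ℚ) - 2) * p₁ + 2) ≠ 0 := by nlinarith
  have hd₂ : (2 : ℚ) * (((n : ℚ) - 2) * p₂ + 2) ≠ 0 := by nlinarith
  have key : (p₁ : ℚ) = p₂ := by
    rw [div_eq_div_iff hd₁ hd₂] at h
    nlinarith [h]
  exact_mod_cast key
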